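/- Let m ≥ 1, n ≥ 1, k ≥ 1 be integers. Consider a multicake with m islands in which all n agents share the same valuation: each of m−1 'small' islands has value 1, and one 'big' island has value n, so the total value is n+m−1. Then in every allocation assigning to each agent a union of at most k subintervals of islands (with pairwise disjoint pieces), at least one agent receives a piece of value at most k. -/

import Mathlib

open MeasureTheory Set
open scoped ENNReal


/-- Upper bound example (Lemma 1). The multicake has `m` unit-interval
islands, modeled as `{i} × [0,1] ⊆ Fin m × ℝ`. All `n` agents share the same
valuation: island `0` (the "big" island) has value `n` and each other island
has value `1` (value = weighted Lebesgue length). In every `k`-feasible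
allocation (each agent gets a union of at most `k` subintervals of islands,
pieces pairwise disjoint), some agent receives value at most `k`. -/
theorem stmt_7 (m n k : ℕ) (hm : 1 ≤ m) (hn : 1 ≤ n) (hk : 1 ≤ k)
    (val : Set (Fin m × ℝ) → ℝ)
    (hval : ∀ Z : Set (Fin m × ℝ), val Z = ∑ i : Fin m,
      (if i = (⟨0, hm⟩ : Fin m) then (n : ℝ) else 1) *
        (MeasureTheory.volume ((fun t => (i, t)) ⁻¹' Z ∩ Set.Icc (0:ℝ) 1)).toReal)
    (Z : Fin n → Set (Fin m × ℝ))
    (hfeas : ∀ a, ∃ (f : Fin k → Fin m) (lo hi : Fin k → ℝ),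
      Z a = ⋃ j, {f j} ×ˢ Set.Icc (lo j) (hi j))
    (hdisj : Pairwise (Function.onFun Disjoint Z)) :
    ∃ a, val (Z a) ≤ k := by
  by_contra hcon
  push_neg at hcon
  set big : Fin m := ⟨0, hm⟩ with hbig
  set P : Fin n → Fin m → Set ℝ :=
    fun a i => (fun t => (i, t)) ⁻¹' Z a ∩ Set.Icc (0:ℝ) 1 with hP
  -- per-agent facts
  have key : ∀ a : Fin n, MeasurableSet (P a big) ∧
      ∃ b : ℕ, 1 ≤ b ∧ (b : ℝ) < n * (volume (P a big)).toReal := by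
    intro a
    obtain ⟨f, lo, hi, hZ⟩ := hfeas a
    have hpre : ∀ i : Fin m, (fun t => (i, t)) ⁻¹' Z a =
        ⋃ j ∈ Finset.univ.filter (fun j => f j = i), Set.Icc (lo j) (hi j) := by
      intro i
      ext x
      simp only [hZ, Set.preimage_iUnion, Set.mem_iUnion, Set.mem_preimage,
        Set.mem_prod, Set.mem_singleton_iff, Finset.mem_filter, Finset.mem_univ,
        true_and]
      constructor
      · rintro ⟨j, hj1, hj2⟩; exact ⟨j, hj1.symm, hj2⟩
      · rintro ⟨j, hj1, hj2⟩; exact ⟨j, hj1.symm, hj2⟩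
    have hmeas : ∀ i, MeasurableSet (P a i) := by
      intro i
      rw [hP]
      simp only
      rw [hpre i]
      exact (Finset.measurableSet_biUnion _ (fun j _ => measurableSet_Icc)).inter
        measurableSet_Icc
    have hboundE : ∀ i : Fin m, volume (P a i) ≤
        ((Finset.univ.filter (fun j => f j = i)).card : ℝ≥0∞) := by
      intro i
      have hsub : P a i ⊆ ⋃ j ∈ Finset.univ.filter (fun j => f j = i),
          (Set.Icc (lo j) (hi j) ∩ Set.Icc (0:ℝ) 1) := by
        rw [hP]; simp only
        rw [hpre i, Set.iUnion₂_inter]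
      calc volume (P a i) ≤ _ := measure_mono hsub
        _ ≤ ∑ j ∈ Finset.univ.filter (fun j => f j = i),
              volume (Set.Icc (lo j) (hi j) ∩ Set.Icc (0:ℝ) 1) :=
            measure_biUnion_finset_le _ _
        _ ≤ ∑ j ∈ Finset.univ.filter (fun j => f j = i), 1 := by
            refine Finset.sum_le_sum fun j _ => ?_
            calc volume (Set.Icc (lo j) (hi j) ∩ Set.Icc (0:ℝ) 1)
                ≤ volume (Set.Icc (0:ℝ) 1) := measure_mono inter_subset_right
              _ = 1 := by simp [Real.volume_Icc]
        _ = _ := by simp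
    refine ⟨hmeas big, ?_⟩
    set b : ℕ := (Finset.univ.filter (fun j => f j = big)).card with hb
    have hboundR : ∀ i : Fin m, (volume (P a i)).toReal ≤
        ((Finset.univ.filter (fun j => f j = i)).card : ℝ) := by
      intro i
      have := ENNReal.toReal_mono (by simp) (hboundE i)
      simpa using this
    -- split val into big + rest
    have hvalsplit : val (Z a) = (n : ℝ) * (volume (P a big)).toReal +
        ∑ i ∈ Finset.univ.erase big, (volume (P a i)).toReal := by
      rw [hval (Z a)]
      rw [← Finset.add_sum_erase _ _ (Finset.mem_univ big)]
      simp only [if_pos rfl]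
      congr 1
      refine Finset.sum_congr rfl fun i hi' => ?_
      rw [if_neg (Finset.mem_erase.mp hi').1, one_mul]
    -- fiber count identity
    have hfibers : ∑ i : Fin m, (Finset.univ.filter (fun j => f j = i)).card = k := by
      rw [← Finset.card_eq_sum_card_fiberwise (fun j _ => Finset.mem_univ (f j))]
      simp
    have hfibers' : (b : ℝ) + ∑ i ∈ Finset.univ.erase big,
        ((Finset.univ.filter (fun j => f j = i)).card : ℝ) = k := by
      have h2 := Finset.add_sum_erase Finset.univ
        (fun i : Fin m => (Finset.univ.filter (fun j => f j = i)).card)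
        (Finset.mem_univ big)
      have : b + ∑ i ∈ Finset.univ.erase big,
          (Finset.univ.filter (fun j => f j = i)).card = k := by
        rw [hb]; beta_reduce at h2; omega
      exact_mod_cast congrArg (Nat.cast : ℕ → ℝ) this
    have hgt := hcon a
    have hub : val (Z a) ≤ (n : ℝ) * (volume (P a big)).toReal + ((k : ℝ) - b) := by
      rw [hvalsplit]
      gcongr 
      calc ∑ i ∈ Finset.univ.erase big, (volume (P a i)).toReal
          ≤ ∑ i ∈ Finset.univ.erase big,
              ((Finset.univ.filter (fun j => f j = i)).card : ℝ) :=
            Finset.sum_le_sum fun i _ => hboundR i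
        _ = (k : ℝ) - b := by linarith [hfibers']
    have hblt : (b : ℝ) < n * (volume (P a big)).toReal := by linarith
    refine ⟨b, ?_, hblt⟩
    rcases Nat.eq_zero_or_pos b with h0 | h1
    · exfalso
      have : volume (P a big) = 0 := by
        have := hboundE big
        rw [← hb, h0] at this
        simpa using this
      rw [this] at hblt
      simp [h0] at hblt
    · exact h1
  choose hmeasP hbchoice using key
  choose b hb1 hblt using hbchoice
  -- Sum over agents
  have hdisjP : Pairwise (Function.onFun Disjoint (fun a => P a big)) := by
    intro a a' haa'
    have := hdisj haa'
    exact Disjoint.mono inter_subset_left inter_subset_left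
      (Disjoint.preimage _ this)
  have hsum_vol : ∑ a : Fin n, volume (P a big) ≤ 1 := by
    rw [← tsum_fintype (L := SummationFilter.unconditional _)]
    rw [← measure_iUnion hdisjP hmeasP]
    calc volume (⋃ a, P a big) ≤ volume (Set.Icc (0:ℝ) 1) :=
        measure_mono (Set.iUnion_subset fun a => inter_subset_right)
      _ = 1 := by simp [Real.volume_Icc]
    
  have hfinP : ∀ a, volume (P a big) ≠ ⊤ := by
    intro a h
    have h1 : (b a : ℝ) < n * (volume (P a big)).toReal := hblt a
    rw [h] at h1
    simp at h1
    exact absurd h1 (not_lt.mpr (Nat.cast_nonneg _))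
  have hsum_real : ∑ a : Fin n, (volume (P a big)).toReal ≤ 1 := by
    rw [← ENNReal.toReal_sum (fun a _ => hfinP a)]
    have h1 : ((1 : ℝ≥0∞)).toReal = 1 := by simp
    calc (∑ a : Fin n, volume (P a big)).toReal
        ≤ ((1:ℝ≥0∞)).toReal := ENNReal.toReal_mono (by simp) hsum_vol
      _ = 1 := by simp
  have hnonempty : (Finset.univ : Finset (Fin n)).Nonempty := by
    simpa using Finset.univ_nonempty_iff.mpr (Fin.pos_iff_nonempty.mp hn)
  have hsumlt : ∑ a : Fin n, (b a : ℝ) < ∑ a : Fin n, (n : ℝ) * (volume (P a big)).toReal :=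
    Finset.sum_lt_sum_of_nonempty hnonempty fun a _ => hblt a
  have hlow : (n : ℝ) ≤ ∑ a : Fin n, (b a : ℝ) := by
    calc (n : ℝ) = ∑ _a : Fin n, (1 : ℝ) := by simp
      _ ≤ _ := Finset.sum_le_sum fun a _ => by exact_mod_cast hb1 a
  have hup : ∑ a : Fin n, (n : ℝ) * (volume (P a big)).toReal ≤ n := by
    rw [← Finset.mul_sum]
    nlinarith [hsum_real, Nat.cast_nonneg (α := ℝ) n]
  linarith
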